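/- In the WBE design where all pairwise correlation coefficients equal ρ with ρ² = (N−τ)/((N−1)τ) (N = total users, τ < N), and power allocation P_k = α γ_k/(1+γ_k), the condition that all users meet their SINR targets, ∑_{p∈same-sequence group} γ_p/(1+γ_p) + (1/κ) ∑_{r∈other users} γ_r/(1+γ_r) ≤ 1 with κ = 1/ρ² = (N−1)τ/(N−τ), is implied by the per-group inequality ∑_{s=1}^{K} γ_s/(1+γ_s) ≤ κ/L + (1−κ)γ_q/(1+γ_q) together with ∑ γ/(1+γ) ≤ τ/L per cell. -/

import Mathlib

open Finset

theorem wbe_sinr_condition (L K τ : ℕ) (hL : 0 < L) (hτ : 0 < τ) (hτK : τ < K)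
    (γ : Fin L → Fin K → ℝ) (hpos : ∀ l k, 0 < γ l k)
    (N : ℕ) (hN : N = K * L)
    (κ : ℝ) (hκ : κ = ((N : ℝ) - 1) * τ / ((N : ℝ) - τ))
    (e : Fin L → Fin K → ℝ) (he : ∀ l k, e l k = γ l k / (1 + γ l k))
    (hcell : ∀ l, ∑ k, e l k ≤ (τ : ℝ) / L)
    (hgroup : ∀ l q, ∑ s, e l s ≤ κ / L + (1 - κ) * e l q) :
    ∀ q : Fin K, (∑ i, e i q) +
      (1 / κ) * (∑ r, ∑ s ∈ Finset.univ.filter (fun s : Fin K => s ≠ q), e r s) ≤ 1 := by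
  intro q
  have hτN : τ < N := by
    calc τ < K := hτK
    _ ≤ K * L := Nat.le_mul_of_pos_right K hL
    _ = N := hN.symm
  have hN2 : 2 ≤ N := by omega
  have hτNR : (τ : ℝ) < N := by exact_mod_cast hτN
  have hN2R : (2 : ℝ) ≤ N := by exact_mod_cast hN2
  have hτ1 : (1 : ℝ) ≤ τ := by exact_mod_cast hτ
  have hκpos : 0 < κ := by
    rw [hκ]
    apply div_pos
    · nlinarith
    · linarith
  -- rewrite the filtered sum
  have hfil : ∀ r : Fin L, ∑ s ∈ Finset.univ.filter (fun s : Fin K => s ≠ q), e r s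
      = (∑ s, e r s) - e r q := by
    intro r
    rw [Finset.filter_ne', Finset.sum_erase_eq_sub (Finset.mem_univ q)]
  have hsum : ∑ r, ∑ s ∈ Finset.univ.filter (fun s : Fin K => s ≠ q), e r s
      = (∑ r, ∑ s, e r s) - ∑ r, e r q := by
    rw [← Finset.sum_sub_distrib]
    exact Finset.sum_congr rfl fun r _ => hfil r
  rw [hsum]
  set T := ∑ r, e r q with hT
  set S := ∑ r, ∑ s, e r s with hS
  have hSle : S ≤ κ + (1 - κ) * T := by
    have h1 : S ≤ ∑ _r : Fin L, (κ / L + (1 - κ) * e _r q) :=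
      Finset.sum_le_sum fun r _ => hgroup r q
    have h2 : ∑ _r : Fin L, (κ / L + (1 - κ) * e _r q)
        = κ + (1 - κ) * T := by
      rw [Finset.sum_add_distrib, Finset.sum_const, ← Finset.mul_sum]
      have hL' : (L : ℝ) ≠ 0 := by positivity
      simp only [Finset.card_univ, Fintype.card_fin, nsmul_eq_mul]
      field_simp
      rfl
    linarith [h1.trans_eq h2]
  have hmul : (1 / κ) * S ≤ (1 / κ) * (κ + (1 - κ) * T) :=
    mul_le_mul_of_nonneg_left hSle (by positivity)
  have hκne : κ ≠ 0 := ne_of_gt hκpos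
  have : (1 / κ) * (κ + (1 - κ) * T) = 1 + (1 / κ) * T - T := by
    field_simp
    ring
  nlinarith [hmul]
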